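/- Suppose Assumption A holds and let φ : ℕ → (0,∞) be an eventually increasing sequence. If limsup_{m→∞} ξ*(T_m)/φ(T_{m−1}) = 0 P_0-almost surely, then limsup_{n→∞} ξ*_n/φ(n) = 0 P_0-almost surely. Similarly, if liminf_{m→∞} ξ*(T_m)/φ(T_{m+1}) = ∞ P_0-almost surely, then liminf_{n→∞} ξ*_n/φ(n) = ∞ P_0-almost surely. -/

import Mathlib

open MeasureTheory ProbabilityTheory Filter Finset

noncomputable section

/-- The space of (raw) cookie environments: `ω z i` is the strength of the `i`-th cookie
at site `z`. -/
abbrev CookieEnv : Type := ℤ → ℕ → ℝ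

/-- The space of paths of a walk on `ℤ`. -/
abbrev WalkPath : Type := ℕ → ℤ

/-- `ω` is a genuine cookie environment with `M` cookies per site: all strengths lie in `[0,1]`
and the strengths of cookies of index `> M` equal `1/2`. -/
def IsCookie (M : ℕ) (ω : CookieEnv) : Prop :=
  ∀ z i, ω z i ∈ Set.Icc (0 : ℝ) 1 ∧ (M < i → ω z i = 1 / 2)

/-- `ξ_n = #{0 ≤ i ≤ n : x i = x n}`, the number of visits to the current site by time `n`. -/
def xiSelf (x : WalkPath) (n : ℕ) : ℕ :=
  ((Finset.range (n + 1)).filter fun i => x i = x n).card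

/-- The occupation time `ξ_n(z) = #{0 ≤ i ≤ n : X i = z}` of site `z` by time `n`. -/
def occTime (X : WalkPath) (n : ℕ) (z : ℤ) : ℕ :=
  ((Finset.range (n + 1)).filter fun i => X i = z).card

/-- `ξ*_n = max_{z ∈ ℤ} ξ_n(z)`, the maximal occupation time of a single site by time `n`. -/
def xiStar (X : WalkPath) (n : ℕ) : ℕ := sSup (Set.range (occTime X n))

/-- The hitting time `T_m = inf{n : X n = m}`. -/
def hitTime (X : WalkPath) (m : ℤ) : ℕ := sInf {n | X n = m}

/-- `D_k^m`: the number of down-crossings from `k` to `k-1` before time `T_m`. -/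
def downCross (X : WalkPath) (m k : ℤ) : ℕ :=
  ((Finset.range (hitTime X m)).filter fun i => X i = k ∧ X (i + 1) = k - 1).card

/-- The annealed expected total drift `δ` of the cookie environment. -/
def erwDelta (M : ℕ) (P : Measure CookieEnv) : ℝ :=
  ∫ ω, (∑ i ∈ Finset.Icc 1 M, (2 * ω 0 i - 1)) ∂P

/-- Assumption A: (a) the piles `(ω_z)_{z ∈ ℤ}` are i.i.d. under `P`; (b) non-degeneracy;
(c) `δ > 1`. -/
def AssumptionA (M : ℕ) (P : Measure CookieEnv) : Prop :=
  iIndepFun (fun z (ω : CookieEnv) => ω z) P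
    ∧ (∀ z : ℤ, IdentDistrib (fun ω : CookieEnv => ω z) (fun ω : CookieEnv => ω 0) P P)
    ∧ 0 < ∫ ω, (∏ i ∈ Finset.Icc 1 M, ω 0 i) ∂P
    ∧ 0 < ∫ ω, (∏ i ∈ Finset.Icc 1 M, (1 - ω 0 i)) ∂P
    ∧ 1 < erwDelta M P

/-- The data of an excited random walk with `M` cookies per site: an environment law `envLaw`
(a probability measure on cookie environments), quenched laws `quenched ω` on the path space
(probability measures satisfying the ERW transition rule with start at `0`), and the annealed
law `annealed = ∫ quenched ω d(envLaw)`. -/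
structure ERWLaw (M : ℕ) where
  envLaw : Measure CookieEnv
  envLaw_prob : IsProbabilityMeasure envLaw
  envLaw_cookie : ∀ᵐ ω ∂envLaw, IsCookie M ω
  quenched : CookieEnv → Measure WalkPath
  quenched_prob : ∀ ω, IsProbabilityMeasure (quenched ω)
  quenched_meas : Measurable quenched
  quenched_start : ∀ᵐ ω ∂envLaw, quenched ω {X : WalkPath | X 0 = 0} = 1
  quenched_up : ∀ᵐ ω ∂envLaw, ∀ (n : ℕ) (x : WalkPath),
    quenched ω {X : WalkPath | (∀ i ≤ n, X i = x i) ∧ X (n + 1) = x n + 1}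
      = ENNReal.ofReal (ω (x n) (xiSelf x n))
          * quenched ω {X : WalkPath | ∀ i ≤ n, X i = x i}
  quenched_down : ∀ᵐ ω ∂envLaw, ∀ (n : ℕ) (x : WalkPath),
    quenched ω {X : WalkPath | (∀ i ≤ n, X i = x i) ∧ X (n + 1) = x n - 1}
      = ENNReal.ofReal (1 - ω (x n) (xiSelf x n))
          * quenched ω {X : WalkPath | ∀ i ≤ n, X i = x i}
  annealed : Measure WalkPath
  annealed_def : ∀ A : Set WalkPath, MeasurableSet A →
    annealed A = ∫⁻ ω, quenched ω A ∂envLaw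

/-- The data of the coin-tossing construction: a probability space `(Ω', P)` carrying an
environment `envOf` with law `envLaw` and coins `coin z i` which are, conditionally on the
environment, independent `±1`-valued with `P(coin z i = 1 | ω) = ω z i`. -/
structure CoinLaw (M : ℕ) (Ω' : Type) [MeasurableSpace Ω'] where
  envLaw : Measure CookieEnv
  envLaw_prob : IsProbabilityMeasure envLaw
  envLaw_cookie : ∀ᵐ ω ∂envLaw, IsCookie M ω
  P : Measure Ω'
  P_prob : IsProbabilityMeasure P
  envOf : Ω' → CookieEnv
  envOf_meas : Measurable envOf
  envOf_law : P.map envOf = envLaw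
  coin : ℤ → ℕ → Ω' → ℤ
  coin_meas : ∀ z i, Measurable (coin z i)
  coin_law : ∀ (F : Finset (ℤ × ℕ)) (s : ℤ × ℕ → Bool) (A : Set CookieEnv),
    MeasurableSet A →
    P {ω' | envOf ω' ∈ A ∧ ∀ p ∈ F, coin p.1 p.2 ω' = (if s p then 1 else -1)}
      = ∫⁻ ω in A, (∏ p ∈ F, ENNReal.ofReal (if s p then ω p.1 p.2 else 1 - ω p.1 p.2)) ∂envLaw

/-- The number of successes (`+1`'s) among the first `n` terms of the coin sequence `b`. -/
def numSucc (b : ℕ → ℤ) (n : ℕ) : ℕ := ((Finset.range n).filter fun i => b i = 1).card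

/-- `F_m`: the number of failures (`-1`'s) before the `m`-th success in the coin sequence `b`. -/
def failuresBefore (b : ℕ → ℤ) (m : ℕ) : ℕ := sInf {n | numSucc b n = m} - m

variable {M : ℕ} {Ω' : Type} [MeasurableSpace Ω']

/-- The branching process `V`: `V 0 = 0`, `V (k+1) = F^{(k)}_{V k + 1}`, where `F^{(z)}_m` is the
number of failures before the `m`-th success in the coin pile `(coin z i)_{i ≥ 1}` at site `z`. -/
def branchV (C : CoinLaw M Ω') (ω' : Ω') : ℕ → ℕ
  | 0 => 0
  | k + 1 => failuresBefore (fun i => C.coin (k : ℤ) (i + 1) ω') (branchV C ω' k + 1)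

/-- `sigmaSeq C ω' k = σ_{k-1}`: `σ_{-1} = 0` and `σ_k = inf{i > σ_{k-1} : V i = 0}`. -/
def sigmaSeq (C : CoinLaw M Ω') (ω' : Ω') : ℕ → ℕ
  | 0 => 0
  | k + 1 => sInf {i | sigmaSeq C ω' k < i ∧ branchV C ω' i = 0}

/-- `ϱ_m = min{k ≥ 0 : σ_k ≥ m}`, the number of renewal epochs completed by generation `m`. -/
def varrho (C : CoinLaw M Ω') (ω' : Ω') (m : ℕ) : ℕ := sInf {k | m ≤ sigmaSeq C ω' (k + 1)}

/-- `S_k = Σ_{i = σ_{k-1}}^{σ_k - 1} V i`, the total population of the `(k+1)`-th life cycle. -/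
def cycleS (C : CoinLaw M Ω') (ω' : Ω') (k : ℕ) : ℕ :=
  ∑ i ∈ Finset.Ico (sigmaSeq C ω' k) (sigmaSeq C ω' (k + 1)), branchV C ω' i

/-- `M_k = max_{σ_{k-1} ≤ i < σ_k} V i`, the most populated generation of the `(k+1)`-th cycle. -/
def cycleMax (C : CoinLaw M Ω') (ω' : Ω') (k : ℕ) : ℕ :=
  (Finset.Ico (sigmaSeq C ω' k) (sigmaSeq C ω' (k + 1))).sup (branchV C ω')

/-- `μ = E_0^V[σ_0]`. -/
def cycleMean (C : CoinLaw M Ω') : ℝ := ∫ ω', (sigmaSeq C ω' 1 : ℝ) ∂C.P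

/-- `a_m^+ = ⌊μ⁻¹ (m + m^{1/δ'})⌋`. -/
def aPlus (μ δ' : ℝ) (m : ℕ) : ℕ := ⌊μ⁻¹ * ((m : ℝ) + (m : ℝ) ^ (1 / δ'))⌋₊

/-- `a_m^- = ⌊μ⁻¹ (m - m^{1/δ'})⌋`. -/
def aMinus (μ δ' : ℝ) (m : ℕ) : ℕ := ⌊μ⁻¹ * ((m : ℝ) - (m : ℝ) ^ (1 / δ'))⌋₊

end


section Aux12
open Topology

lemma occTime_le (X : ℕ → ℤ) (n : ℕ) (z : ℤ) : occTime X n z ≤ n + 1 := by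
  classical
  calc occTime X n z ≤ (Finset.range (n+1)).card := Finset.card_filter_le _ _
  _ = n + 1 := Finset.card_range _

lemma occTime_mono (X : ℕ → ℤ) {n n' : ℕ} (h : n ≤ n') (z : ℤ) :
    occTime X n z ≤ occTime X n' z := by
  classical
  exact Finset.card_le_card (Finset.filter_subset_filter _
    (Finset.range_subset_range.2 (by omega)))

lemma bddAbove_occ (X : ℕ → ℤ) (n : ℕ) : BddAbove (Set.range (occTime X n)) :=
  ⟨n + 1, by rintro _ ⟨z, rfl⟩; exact occTime_le X n z⟩

lemma occTime_le_xiStar (X : ℕ → ℤ) (n : ℕ) (z : ℤ) : occTime X n z ≤ xiStar X n :=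
  le_csSup (bddAbove_occ X n) ⟨z, rfl⟩

lemma xiStar_le (X : ℕ → ℤ) (n k : ℕ) (h : ∀ z, occTime X n z ≤ k) : xiStar X n ≤ k :=
  csSup_le ⟨occTime X n 0, ⟨0, rfl⟩⟩ (by rintro _ ⟨z, rfl⟩; exact h z)

lemma xiStar_mono (X : ℕ → ℤ) {n n' : ℕ} (h : n ≤ n') : xiStar X n ≤ xiStar X n' :=
  xiStar_le X n _ fun z => (occTime_mono X h z).trans (occTime_le_xiStar X n' z)

lemma xiStar_zero (X : ℕ → ℤ) : xiStar X 0 = 1 := by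
  classical
  refine le_antisymm (xiStar_le X 0 1 fun z => occTime_le X 0 z) ?_
  have : occTime X 0 (X 0) = 1 := by
    simp [occTime, Finset.range_one, Finset.filter_singleton]
  exact this ▸ occTime_le_xiStar X 0 (X 0)

section IVT
variable {X : ℕ → ℤ} (hstep : ∀ n, X (n+1) = X n + 1 ∨ X (n+1) = X n - 1)

include hstep in
lemma ivt : ∀ (n : ℕ) (c : ℤ), X 0 ≤ c → c ≤ X n → ∃ j ≤ n, X j = c := by
  intro n
  induction n with
  | zero => intro c h1 h2; exact ⟨0, le_refl _, le_antisymm h1 h2⟩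
  | succ n ih =>
    intro c h1 h2
    by_cases hc : c ≤ X n
    · obtain ⟨j, hj, hje⟩ := ih c h1 hc
      exact ⟨j, hj.trans (Nat.le_succ n), hje⟩
    · push_neg at hc
      have hle : X (n+1) ≤ X n + 1 := by rcases hstep n with h | h <;> omega
      exact ⟨n + 1, le_refl _, by omega⟩

variable (hX0 : X 0 = 0)

include hstep hX0 in
/-- If the path misses some nonnegative site, it misses all larger ones. -/
lemma miss_larger {m₀ : ℕ} (hm : ∀ n, X n ≠ (m₀ : ℤ)) {m : ℕ} (hm₀ : m₀ ≤ m) :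
    ∀ n, X n ≠ (m : ℤ) := by
  intro n hn
  obtain ⟨j, _, hj⟩ := ivt hstep n (m₀ : ℤ) (by simp [hX0]) (by rw [hn]; exact_mod_cast hm₀)
  exact hm j hj

/-- In the hitting case, basic facts. -/
lemma hit_apply {m : ℕ} (h : ∃ n, X n = (m : ℤ)) : X (hitTime X m) = (m : ℤ) :=
  Nat.sInf_mem h

include hX0 in
lemma hitTime_zero' : hitTime X 0 = 0 :=
  Nat.eq_zero_of_le_zero (Nat.sInf_le (by simpa [Set.mem_setOf_eq] using hX0))

include hstep hX0 in
lemma hitTime_strict (hall : ∀ m : ℕ, ∃ n, X n = (m : ℤ)) (m : ℕ) :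
    hitTime X m < hitTime X ((m : ℤ) + 1) := by
  have h1 : X (hitTime X ((m:ℤ)+1)) = (m : ℤ) + 1 := by
    have := hall (m+1)
    have h := Nat.sInf_mem (s := {n | X n = (m:ℤ)+1}) (by
      obtain ⟨n, hn⟩ := this; exact ⟨n, show X n = (m:ℤ)+1 by push_cast at hn; omega⟩)
    exact h
  obtain ⟨j, hj, hje⟩ := ivt hstep (hitTime X ((m:ℤ)+1)) (m : ℤ) (by simp [hX0]) (by rw [h1]; omega)
  have hlt : j < hitTime X ((m:ℤ)+1) := lt_of_le_of_ne hj (by rintro rfl; omega)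
  exact lt_of_le_of_lt (Nat.sInf_le hje) hlt

end IVT

section Det
variable {X : ℕ → ℤ} (hstep : ∀ n, X (n+1) = X n + 1 ∨ X (n+1) = X n - 1) (hX0 : X 0 = 0)

include hstep hX0 in
lemma exists_block (hall : ∀ m : ℕ, ∃ n, X n = (m : ℤ)) (n : ℕ) :
    ∃ m : ℕ, hitTime X ((m : ℕ) : ℤ) ≤ n ∧ n < hitTime X ((m + 1 : ℕ) : ℤ) := by
  have hsm : StrictMono (fun m : ℕ => hitTime X (m : ℤ)) := by
    apply strictMono_nat_of_lt_succ
    intro m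
    have := hitTime_strict hstep hX0 hall m
    simpa [Nat.cast_add, Nat.cast_one] using this
  have hw : ∃ k : ℕ, n < hitTime X (k : ℤ) :=
    ⟨n + 1, lt_of_lt_of_le (Nat.lt_succ_self n) hsm.le_apply⟩
  classical
  set k := Nat.find hw with hk
  have hk1 : 1 ≤ k := by
    rcases Nat.eq_zero_or_pos k with h0 | h; swap; · exact h
    have := Nat.find_spec hw
    rw [← hk, h0] at this
    simp [hitTime_zero' hX0] at this
  refine ⟨k - 1, ?_, ?_⟩
  · by_contra hc
    push_neg at hc
    exact Nat.find_min hw (by omega) hc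
  · have hs : n < hitTime X (k : ℤ) := Nat.find_spec hw
    have he : k - 1 + 1 = k := by omega
    rw [he]
    exact hs

include hstep hX0 in
lemma det_part1 (φ : ℕ → ℝ) (hpos : ∀ n, 0 < φ n) (N : ℕ)
    (hmono : ∀ m n : ℕ, N ≤ m → m ≤ n → φ m ≤ φ n)
    (h : Filter.limsup (fun m : ℕ =>
          (((xiStar X (hitTime X (m : ℤ)) : ℝ) / φ (hitTime X ((m : ℤ) - 1)) : ℝ) : EReal))
          Filter.atTop = 0) :
    Filter.limsup (fun n : ℕ => (((xiStar X n : ℝ) / φ n : ℝ) : EReal)) Filter.atTop = 0 := by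
  set a : ℕ → ℝ := fun m => (xiStar X (hitTime X (m : ℤ)) : ℝ) / φ (hitTime X ((m : ℤ) - 1))
  by_cases hall : ∀ m : ℕ, ∃ n, X n = (m : ℤ)
  · -- main case
    have hanonneg : ∀ m, (0 : ℝ) ≤ a m := fun m =>
      div_nonneg (Nat.cast_nonneg _) (hpos _).le
    have hliminf : Filter.liminf (fun m : ℕ => ((a m : ℝ) : EReal)) Filter.atTop = 0 := by
      refine le_antisymm (h ▸ liminf_le_limsup) ?_
      refine le_liminf_of_le (by isBoundedDefault) ?_
      filter_upwards with m using by exact_mod_cast hanonneg m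
    have hTa : Filter.Tendsto (fun m : ℕ => ((a m : ℝ) : EReal)) Filter.atTop (𝓝 0) :=
      tendsto_of_liminf_eq_limsup hliminf h (by isBoundedDefault) (by isBoundedDefault)
    have hTr : Filter.Tendsto a Filter.atTop (𝓝 0) := by
      rw [show ((0:EReal)) = ((0:ℝ):EReal) by norm_cast] at hTa
      exact EReal.tendsto_coe.1 hTa
    suffices hT : Filter.Tendsto (fun n => (xiStar X n : ℝ) / φ n) Filter.atTop (𝓝 0) by
      have : Filter.Tendsto (fun n : ℕ => (((xiStar X n : ℝ) / φ n : ℝ) : EReal))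
          Filter.atTop (𝓝 ((0:ℝ) : EReal)) := EReal.tendsto_coe.2 hT
      rw [show (((0:ℝ)):EReal) = (0:EReal) by norm_cast] at this
      exact this.limsup_eq
    rw [Metric.tendsto_atTop]
    intro ε hε
    rw [Metric.tendsto_atTop] at hTr
    obtain ⟨M₁, hM₁⟩ := hTr ε hε
    refine ⟨hitTime X ((max M₁ N : ℕ) : ℤ) , fun n hn => ?_⟩
    obtain ⟨m, hm1, hm2⟩ := exists_block hstep hX0 hall n
    have hmge : max M₁ N ≤ m := by
      by_contra hcon
      push_neg at hcon
      have hsm : StrictMono (fun m : ℕ => hitTime X (m : ℤ)) := by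
        apply strictMono_nat_of_lt_succ
        intro m
        simpa [Nat.cast_add, Nat.cast_one] using hitTime_strict hstep hX0 hall m
      have h2 : hitTime X ((m + 1 : ℕ) : ℤ) ≤ hitTime X ((max M₁ N : ℕ) : ℤ) :=
        hsm.monotone (Nat.succ_le_of_lt hcon)
      omega
    have hTm : StrictMono (fun m : ℕ => hitTime X (m : ℤ)) := by
      apply strictMono_nat_of_lt_succ
      intro m
      simpa [Nat.cast_add, Nat.cast_one] using hitTime_strict hstep hX0 hall m
    have hNn : N ≤ hitTime X (m : ℤ) := le_trans (le_trans (le_max_right M₁ N) hmge)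
      (hTm.le_apply)
    have hkey : (xiStar X n : ℝ) / φ n ≤ a (m + 1) := by
      have hc : (((m+1 : ℕ)) : ℤ) - 1 = (m : ℤ) := by push_cast; ring
      have hnum : (xiStar X n : ℝ) ≤ (xiStar X (hitTime X ((m+1:ℕ) : ℤ)) : ℝ) := by
        exact_mod_cast xiStar_mono X hm2.le
      have hden : φ (hitTime X (m : ℤ)) ≤ φ n := hmono _ _ hNn hm1
      have := div_le_div₀ (Nat.cast_nonneg _) hnum (hpos (hitTime X (m:ℤ))) hden
      simpa [a, hc] using this
    have habs : |a (m+1) - 0| < ε := by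
      have := hM₁ (m+1) (by omega)
      simpa [Real.dist_eq] using this
    have : dist ((xiStar X n : ℝ) / φ n) 0 = (xiStar X n : ℝ) / φ n := by
      rw [Real.dist_eq, sub_zero, abs_of_nonneg (div_nonneg (Nat.cast_nonneg _) (hpos _).le)]
    rw [this]
    have ha1 : a (m+1) < ε := by
      have h0 : 0 ≤ a (m+1) := hanonneg _
      rw [sub_zero, abs_of_nonneg h0] at habs
      exact habs
    exact lt_of_le_of_lt hkey ha1
  · -- degenerate case: contradiction with h
    exfalso
    push_neg at hall
    obtain ⟨m₀, hm₀⟩ := hall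
    have hmiss : ∀ m : ℕ, m₀ ≤ m → ∀ n, X n ≠ (m : ℤ) := fun m hm n =>
      miss_larger hstep hX0 hm₀ hm n
    have hconst : ∀ᶠ m : ℕ in Filter.atTop,
        ((a m : ℝ) : EReal) = ((1 / φ 0 : ℝ) : EReal) := by
      filter_upwards [Filter.eventually_ge_atTop (m₀ + 1)] with m hm
      have h1 : hitTime X (m : ℤ) = 0 := by
        rw [hitTime, show {n | X n = (m:ℤ)} = ∅ from
          Set.eq_empty_iff_forall_notMem.2 (fun n => hmiss m (by omega) n), Nat.sInf_empty]
      have h2 : hitTime X ((m : ℤ) - 1) = 0 := by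
        have hc : (m : ℤ) - 1 = ((m - 1 : ℕ) : ℤ) := by omega
        rw [hc, hitTime, show {n | X n = ((m-1:ℕ):ℤ)} = ∅ from
          Set.eq_empty_iff_forall_notMem.2 (fun n => hmiss (m-1) (by omega) n), Nat.sInf_empty]
      simp only [a, h1, h2, xiStar_zero]
      norm_num
    have : Filter.limsup (fun m : ℕ => ((a m : ℝ) : EReal)) Filter.atTop
        = ((1 / φ 0 : ℝ) : EReal) := by
      rw [limsup_congr hconst, limsup_const]
    rw [h] at this
    have hφ : (0:ℝ) < 1 / φ 0 := one_div_pos.2 (hpos 0)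
    have : (0:ℝ) = 1 / φ 0 := by exact_mod_cast this
    linarith
end Det

section Det2
variable {X : ℕ → ℤ} (hstep : ∀ n, X (n+1) = X n + 1 ∨ X (n+1) = X n - 1) (hX0 : X 0 = 0)

include hstep hX0 in
lemma det_part2 (φ : ℕ → ℝ) (hpos : ∀ n, 0 < φ n) (N : ℕ)
    (hmono : ∀ m n : ℕ, N ≤ m → m ≤ n → φ m ≤ φ n)
    (h : Filter.liminf (fun m : ℕ =>
          (((xiStar X (hitTime X (m : ℤ)) : ℝ) / φ (hitTime X ((m : ℤ) + 1)) : ℝ) : EReal))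
          Filter.atTop = ⊤) :
    Filter.liminf (fun n : ℕ => (((xiStar X n : ℝ) / φ n : ℝ) : EReal)) Filter.atTop = ⊤ := by
  set a : ℕ → ℝ := fun m => (xiStar X (hitTime X (m : ℤ)) : ℝ) / φ (hitTime X ((m : ℤ) + 1))
  by_cases hall : ∀ m : ℕ, ∃ n, X n = (m : ℤ)
  · have hsup : Filter.limsup (fun m : ℕ => ((a m : ℝ) : EReal)) Filter.atTop = ⊤ :=
      top_le_iff.1 (h ▸ liminf_le_limsup)
    have hTa : Filter.Tendsto (fun m : ℕ => ((a m : ℝ) : EReal)) Filter.atTop (𝓝 ⊤) :=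
      tendsto_of_liminf_eq_limsup h hsup (by isBoundedDefault) (by isBoundedDefault)
    have hTr : Filter.Tendsto a Filter.atTop Filter.atTop := by
      rw [EReal.tendsto_nhds_top_iff_real] at hTa
      rw [tendsto_atTop_atTop]
      intro b
      obtain ⟨i, hi⟩ := (hTa b).exists_forall_of_atTop
      exact ⟨i, fun m hm => le_of_lt (by exact_mod_cast hi m hm)⟩
    suffices hT : Filter.Tendsto (fun n => (xiStar X n : ℝ) / φ n) Filter.atTop Filter.atTop by
      have : Filter.Tendsto (fun n : ℕ => (((xiStar X n : ℝ) / φ n : ℝ) : EReal))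
          Filter.atTop (𝓝 ⊤) := by
        rw [EReal.tendsto_nhds_top_iff_real]
        intro x
        filter_upwards [hT.eventually_ge_atTop (x + 1)] with n hn
        exact_mod_cast lt_of_lt_of_le (lt_add_one x) hn
      exact this.liminf_eq
    rw [tendsto_atTop_atTop]
    intro C
    obtain ⟨M₁, hM₁⟩ := (hTr.eventually_ge_atTop C).exists_forall_of_atTop
    have hTm : StrictMono (fun m : ℕ => hitTime X (m : ℤ)) := by
      apply strictMono_nat_of_lt_succ
      intro m
      simpa [Nat.cast_add, Nat.cast_one] using hitTime_strict hstep hX0 hall m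
    refine ⟨hitTime X ((max M₁ N : ℕ) : ℤ), fun n hn => ?_⟩
    obtain ⟨m, hm1, hm2⟩ := exists_block hstep hX0 hall n
    have hmge : max M₁ N ≤ m := by
      by_contra hcon
      push_neg at hcon
      have h2 : hitTime X ((m + 1 : ℕ) : ℤ) ≤ hitTime X ((max M₁ N : ℕ) : ℤ) :=
        hTm.monotone (Nat.succ_le_of_lt hcon)
      omega
    have hNn : N ≤ n := by
      have : max M₁ N ≤ hitTime X ((max M₁ N : ℕ) : ℤ) := hTm.le_apply
      omega
    have hkey : a m ≤ (xiStar X n : ℝ) / φ n := by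
      have hc : ((m : ℤ)) + 1 = ((m + 1 : ℕ) : ℤ) := by push_cast; ring
      have hnum : (xiStar X (hitTime X (m : ℤ)) : ℝ) ≤ (xiStar X n : ℝ) := by
        exact_mod_cast xiStar_mono X hm1
      have hden : φ n ≤ φ (hitTime X ((m + 1 : ℕ) : ℤ)) := hmono _ _ hNn hm2.le
      have := div_le_div₀ (Nat.cast_nonneg _) hnum (hpos n) hden
      show (xiStar X (hitTime X (m : ℤ)) : ℝ) / φ (hitTime X ((m : ℤ) + 1)) ≤ _
      rw [hc]
      exact this
    exact le_trans (hM₁ m (le_trans (le_max_left M₁ N) hmge)) hkey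
  · exfalso
    push_neg at hall
    obtain ⟨m₀, hm₀⟩ := hall
    have hmiss : ∀ m : ℕ, m₀ ≤ m → ∀ n, X n ≠ (m : ℤ) := fun m hm n =>
      miss_larger hstep hX0 hm₀ hm n
    have hconst : ∀ᶠ m : ℕ in Filter.atTop,
        ((a m : ℝ) : EReal) = ((1 / φ 0 : ℝ) : EReal) := by
      filter_upwards [Filter.eventually_ge_atTop m₀] with m hm
      have h1 : hitTime X (m : ℤ) = 0 := by
        rw [hitTime, show {n | X n = (m:ℤ)} = ∅ from
          Set.eq_empty_iff_forall_notMem.2 (fun n => hmiss m hm n), Nat.sInf_empty]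
      have h2 : hitTime X ((m : ℤ) + 1) = 0 := by
        have hc : (m : ℤ) + 1 = ((m + 1 : ℕ) : ℤ) := by push_cast; ring
        rw [hc, hitTime, show {n | X n = ((m+1:ℕ):ℤ)} = ∅ from
          Set.eq_empty_iff_forall_notMem.2 (fun n => hmiss (m+1) (by omega) n), Nat.sInf_empty]
      simp only [a, h1, h2, xiStar_zero]
      norm_num
    have : Filter.liminf (fun m : ℕ => ((a m : ℝ) : EReal)) Filter.atTop
        = ((1 / φ 0 : ℝ) : EReal) := by
      rw [liminf_congr hconst, liminf_const]
    rw [h] at this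
    exact (EReal.coe_ne_top _) this.symm
end Det2


section MeasGlue
open MeasureTheory

lemma measurableSet_coord_eq (i : ℕ) (c : ℤ) : MeasurableSet {X : WalkPath | X i = c} := by
  have h : {X : WalkPath | X i = c} = (fun X : WalkPath => X i) ⁻¹' {c} := rfl
  rw [h]
  exact measurable_pi_apply i (measurableSet_singleton c)

lemma measurableSet_cyl (x : WalkPath) (n : ℕ) :
    MeasurableSet {X : WalkPath | ∀ i ≤ n, X i = x i} := by
  have h : {X : WalkPath | ∀ i ≤ n, X i = x i}
      = ⋂ i ∈ Set.Iic n, {X : WalkPath | X i = x i} := by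
    ext X; simp [Set.mem_iInter]
  rw [h]
  exact MeasurableSet.biInter (Set.to_countable _) fun i _ => measurableSet_coord_eq i (x i)

lemma measurableSet_step_up (n : ℕ) :
    MeasurableSet {X : WalkPath | X (n+1) = X n + 1} := by
  have h : {X : WalkPath | X (n+1) = X n + 1}
      = ⋃ c : ℤ, ({X : WalkPath | X n = c} ∩ {X : WalkPath | X (n+1) = c + 1}) := by
    ext X
    simp only [Set.mem_setOf_eq, Set.mem_iUnion, Set.mem_inter_iff]
    exact ⟨fun h => ⟨X n, rfl, h⟩, fun ⟨c, h1, h2⟩ => by rw [h1]; exact h2⟩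
  rw [h]
  exact MeasurableSet.iUnion fun c =>
    (measurableSet_coord_eq n c).inter (measurableSet_coord_eq (n+1) (c+1))

lemma measurableSet_step_down (n : ℕ) :
    MeasurableSet {X : WalkPath | X (n+1) = X n - 1} := by
  have h : {X : WalkPath | X (n+1) = X n - 1}
      = ⋃ c : ℤ, ({X : WalkPath | X n = c} ∩ {X : WalkPath | X (n+1) = c - 1}) := by
    ext X
    simp only [Set.mem_setOf_eq, Set.mem_iUnion, Set.mem_inter_iff]
    exact ⟨fun h => ⟨X n, rfl, h⟩, fun ⟨c, h1, h2⟩ => by rw [h1]; exact h2⟩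
  rw [h]
  exact MeasurableSet.iUnion fun c =>
    (measurableSet_coord_eq n c).inter (measurableSet_coord_eq (n+1) (c-1))

lemma measurableSet_bad (n : ℕ) :
    MeasurableSet {X : WalkPath | ¬(X (n+1) = X n + 1 ∨ X (n+1) = X n - 1)} := by
  have h : {X : WalkPath | ¬(X (n+1) = X n + 1 ∨ X (n+1) = X n - 1)}
      = ({X : WalkPath | X (n+1) = X n + 1} ∪ {X : WalkPath | X (n+1) = X n - 1})ᶜ := by
    ext X; simp [not_or]
  rw [h]
  exact ((measurableSet_step_up n).union (measurableSet_step_down n)).compl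

/-- Extension of a finite vector to a full path. -/
def extFin (n : ℕ) (v : Fin (n+1) → ℤ) : WalkPath :=
  fun j => if h : j < n + 1 then v ⟨j, h⟩ else 0

lemma extFin_eq (n : ℕ) (v : Fin (n+1) → ℤ) {i : ℕ} (h : i ≤ n) :
    extFin n v i = v ⟨i, Nat.lt_succ_of_le h⟩ := dif_pos _

lemma quenched_bad {M : ℕ} (E : ERWLaw M) :
    ∀ᵐ ω ∂E.envLaw, ∀ n : ℕ,
      E.quenched ω {X : WalkPath | ¬(X (n+1) = X n + 1 ∨ X (n+1) = X n - 1)} = 0 := by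
  filter_upwards [E.envLaw_cookie, E.quenched_up, E.quenched_down] with ω hcook hup hdown
  intro n
  haveI := E.quenched_prob ω
  classical
  have key : ∀ x : WalkPath,
      E.quenched ω ({X : WalkPath | ∀ i ≤ n, X i = x i} \
        ({X : WalkPath | (∀ i ≤ n, X i = x i) ∧ X (n+1) = x n + 1} ∪
         {X : WalkPath | (∀ i ≤ n, X i = x i) ∧ X (n+1) = x n - 1})) = 0 := by
    intro x
    have hUm : MeasurableSet
        {X : WalkPath | (∀ i ≤ n, X i = x i) ∧ X (n+1) = x n + 1} := by
      rw [Set.setOf_and]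
      exact (measurableSet_cyl x n).inter (measurableSet_coord_eq (n+1) (x n + 1))
    have hDm : MeasurableSet
        {X : WalkPath | (∀ i ≤ n, X i = x i) ∧ X (n+1) = x n - 1} := by
      rw [Set.setOf_and]
      exact (measurableSet_cyl x n).inter (measurableSet_coord_eq (n+1) (x n - 1))
    have hdisj : Disjoint
        {X : WalkPath | (∀ i ≤ n, X i = x i) ∧ X (n+1) = x n + 1}
        {X : WalkPath | (∀ i ≤ n, X i = x i) ∧ X (n+1) = x n - 1} := by
      rw [Set.disjoint_left]
      rintro X ⟨_, h1⟩ ⟨_, h2⟩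
      omega
    have hp := (hcook (x n) (xiSelf x n)).1
    have hUD : E.quenched ω
        ({X : WalkPath | (∀ i ≤ n, X i = x i) ∧ X (n+1) = x n + 1} ∪
         {X : WalkPath | (∀ i ≤ n, X i = x i) ∧ X (n+1) = x n - 1})
        = E.quenched ω {X : WalkPath | ∀ i ≤ n, X i = x i} := by
      rw [measure_union hdisj hDm, hup n x, hdown n x, ← add_mul,
        ← ENNReal.ofReal_add hp.1 (by linarith [hp.2])]
      norm_num
    have hsub : {X : WalkPath | (∀ i ≤ n, X i = x i) ∧ X (n+1) = x n + 1} ∪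
         {X : WalkPath | (∀ i ≤ n, X i = x i) ∧ X (n+1) = x n - 1}
        ⊆ {X : WalkPath | ∀ i ≤ n, X i = x i} := by
      rintro X (⟨h, _⟩ | ⟨h, _⟩) <;> exact h
    rw [measure_diff hsub (hUm.union hDm).nullMeasurableSet
      (by rw [hUD]; exact measure_ne_top _ _), hUD, tsub_self]
  set S : (Fin (n+1) → ℤ) → Set WalkPath := fun v =>
    {X : WalkPath | ∀ i ≤ n, X i = extFin n v i} \
      ({X : WalkPath | (∀ i ≤ n, X i = extFin n v i) ∧ X (n+1) = extFin n v n + 1} ∪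
       {X : WalkPath | (∀ i ≤ n, X i = extFin n v i) ∧ X (n+1) = extFin n v n - 1})
    with hSdef
  have hS : ∀ v, E.quenched ω (S v) = 0 := fun v => key (extFin n v)
  have hcover : {X : WalkPath | ¬(X (n+1) = X n + 1 ∨ X (n+1) = X n - 1)} ⊆
      ⋃ v : Fin (n+1) → ℤ, S v := by
    intro X hX
    simp only [Set.mem_setOf_eq, not_or] at hX
    refine Set.mem_iUnion.2 ⟨fun i => X i, ?_, ?_⟩
    · intro i hi
      rw [extFin_eq n _ hi]
    · simp only [Set.mem_union, Set.mem_setOf_eq, not_or]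
      rw [extFin_eq n _ (le_refl n)]
      exact ⟨fun h => hX.1 h.2, fun h => hX.2 h.2⟩
  refine le_antisymm ?_ zero_le
  calc E.quenched ω {X : WalkPath | ¬(X (n+1) = X n + 1 ∨ X (n+1) = X n - 1)}
      ≤ E.quenched ω (⋃ v : Fin (n+1) → ℤ, S v) := measure_mono hcover
    _ ≤ ∑' v : Fin (n+1) → ℤ, E.quenched ω (S v) := measure_iUnion_le S
    _ = 0 := by simp [hS]

lemma ae_good {M : ℕ} (E : ERWLaw M) :
    ∀ᵐ X ∂E.annealed, X 0 = 0 ∧ ∀ n, X (n+1) = X n + 1 ∨ X (n+1) = X n - 1 := by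
  haveI := E.envLaw_prob
  have h1 : E.annealed {X : WalkPath | ¬ X 0 = 0} = 0 := by
    have heq : {X : WalkPath | ¬ X 0 = 0} = {X : WalkPath | X 0 = 0}ᶜ := rfl
    have hm : MeasurableSet {X : WalkPath | ¬ X 0 = 0} := by
      rw [heq]; exact (measurableSet_coord_eq 0 0).compl
    rw [E.annealed_def _ hm]
    have hq : ∀ᵐ ω ∂E.envLaw, E.quenched ω {X : WalkPath | ¬ X 0 = 0} = 0 := by
      filter_upwards [E.quenched_start] with ω hω
      haveI := E.quenched_prob ω
      rw [heq, measure_compl (measurableSet_coord_eq 0 0) (measure_ne_top _ _), hω,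
        measure_univ, tsub_self]
    rw [lintegral_congr_ae hq, lintegral_zero]
  have h2 : ∀ n : ℕ,
      E.annealed {X : WalkPath | ¬(X (n+1) = X n + 1 ∨ X (n+1) = X n - 1)} = 0 := by
    intro n
    rw [E.annealed_def _ (measurableSet_bad n)]
    rw [lintegral_congr_ae ((quenched_bad E).mono fun ω h => h n), lintegral_zero]
  have g1 : ∀ᵐ X ∂E.annealed, X 0 = 0 := ae_iff.2 h1
  have g2 : ∀ᵐ X ∂E.annealed, ∀ n, X (n+1) = X n + 1 ∨ X (n+1) = X n - 1 :=
    ae_all_iff.2 fun n => ae_iff.2 (h2 n)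
  exact g1.and g2

end MeasGlue

end Aux12

/-- Under Assumption A, for an eventually increasing `φ : ℕ → (0,∞)`:
if `limsup ξ*(T_m)/φ(T_{m-1}) = 0` a.s. then `limsup ξ*_n/φ(n) = 0` a.s.; and if
`liminf ξ*(T_m)/φ(T_{m+1}) = ∞` a.s. then `liminf ξ*_n/φ(n) = ∞` a.s. -/
theorem stmt_12 (M : ℕ) (E : ERWLaw M) (hA : AssumptionA M E.envLaw)
    (φ : ℕ → ℝ) (hpos : ∀ n, 0 < φ n)
    (hmono : ∃ N : ℕ, ∀ m n : ℕ, N ≤ m → m ≤ n → φ m ≤ φ n) :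
    ((∀ᵐ X ∂E.annealed,
        Filter.limsup (fun m : ℕ =>
          (((xiStar X (hitTime X (m : ℤ)) : ℝ) / φ (hitTime X ((m : ℤ) - 1)) : ℝ) : EReal))
          Filter.atTop = 0) →
      ∀ᵐ X ∂E.annealed,
        Filter.limsup (fun n : ℕ => (((xiStar X n : ℝ) / φ n : ℝ) : EReal))
          Filter.atTop = 0)
    ∧ ((∀ᵐ X ∂E.annealed,
        Filter.liminf (fun m : ℕ =>
          (((xiStar X (hitTime X (m : ℤ)) : ℝ) / φ (hitTime X ((m : ℤ) + 1)) : ℝ) : EReal))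
          Filter.atTop = ⊤) →
      ∀ᵐ X ∂E.annealed,
        Filter.liminf (fun n : ℕ => (((xiStar X n : ℝ) / φ n : ℝ) : EReal))
          Filter.atTop = ⊤) := by
  obtain ⟨N, hN⟩ := hmono
  constructor
  · intro h
    filter_upwards [ae_good E, h] with X hX hlim
    exact det_part1 hX.2 hX.1 φ hpos N hN hlim
  · intro h
    filter_upwards [ae_good E, h] with X hX hlim
    exact det_part2 hX.2 hX.1 φ hpos N hN hlim
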